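/- Fix θ ∈ ℂ and let g : ℕ → ℂ satisfy ∑_{p ≤ t} g(p) = θ t/log t + E_g(t) with E_g(t) = o(t/log t) and ∫_2^∞ |E_g(t)| t^{-2} dt < ∞. Then for s in any compact subset of ℝ \ {0}, ∑_{p > y} g(p) cos(s log p) p^{-(1 + 1/log y)} → 0 as y → ∞, uniformly on the compact set. -/

import Mathlib

open Filter MeasureTheory

/-- `π_g(t) = ∑_{p ≤ t} g(p)`, the sum over primes up to the real number `t`. -/
noncomputable def primeSum (g : ℕ → ℂ) (t : ℝ) : ℂ :=
  ∑ p ∈ Nat.primesBelow (⌊t⌋₊ + 1), g p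

namespace PTSO

/-- the coefficient sequence -/
noncomputable def c (g : ℕ → ℂ) : ℕ → ℂ := fun n => if n.Prime then g n else 0

lemma primeSum_eq (g : ℕ → ℂ) (t : ℝ) :
    primeSum g t = ∑ k ∈ Finset.Icc 0 ⌊t⌋₊, c g k := by
  rw [primeSum, Nat.primesBelow, Finset.sum_filter,
    Nat.range_eq_Icc_zero_sub_one _ (Nat.succ_ne_zero _), Nat.succ_sub_one]
  rfl

lemma measurable_primeSum (g : ℕ → ℂ) : Measurable (primeSum g) := by
  have : primeSum g = (fun n : ℕ => ∑ p ∈ Nat.primesBelow (n + 1), g p) ∘ Nat.floor := rfl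
  rw [this]
  exact (measurable_from_top).comp Nat.measurable_floor

/-- the complex power function written via `exp`/`log`. -/
noncomputable def φ (w : ℂ) (t : ℝ) : ℂ := Complex.exp (Real.log t * w)

noncomputable def φ' (w : ℂ) (t : ℝ) : ℂ := φ w t * w / t

lemma measurable_φ (w : ℂ) : Measurable (φ w) :=
  Complex.measurable_exp.comp ((Complex.measurable_ofReal.comp Real.measurable_log).mul_const w)

lemma measurable_φ' (w : ℂ) : Measurable (φ' w) :=
  ((measurable_φ w).mul_const w).div (Complex.measurable_ofReal.comp measurable_id)

lemma norm_φ (w : ℂ) {t : ℝ} (ht : 0 < t) : ‖φ w t‖ = t ^ w.re := by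
  rw [φ, Complex.norm_exp, Real.rpow_def_of_pos ht]
  congr 1
  simp [Complex.mul_re]

lemma hasDerivAt_φ (w : ℂ) {t : ℝ} (ht : 0 < t) :
    HasDerivAt (φ w) (φ' w t) t := by
  have h1 : HasDerivAt (fun t : ℝ => ((Real.log t : ℝ) : ℂ) * w) ((t⁻¹ : ℝ) * w) t := by
    exact (HasDerivAt.ofReal_comp (Real.hasDerivAt_log ht.ne')).mul_const w
  have := h1.cexp
  convert this using 1
  · rfl
  rw [φ', φ]
  push_cast
  field_simp


lemma one_le_log {t : ℝ} (ht : 3 ≤ t) : 1 ≤ Real.log t := by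
  rw [show (1 : ℝ) = Real.log (Real.exp 1) by simp]
  exact Real.log_le_log (Real.exp_pos 1) ((Real.exp_one_lt_d9.le.trans (by norm_num)).trans ht)

lemma log_pos' {t : ℝ} (ht : 3 ≤ t) : 0 < Real.log t := lt_of_lt_of_le one_pos (one_le_log ht)

lemma tpos {t : ℝ} (ht : 3 ≤ t) : (0:ℝ) < t := by linarith

lemma φ_add_one (w : ℂ) {t : ℝ} (ht : 0 < t) : φ (w + 1) t = φ w t * t := by
  rw [φ, φ, mul_add, Complex.exp_add, mul_one]
  rw [show Complex.exp ↑(Real.log t) = ((Real.exp (Real.log t) : ℝ) : ℂ) by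
    rw [Complex.ofReal_exp], Real.exp_log ht]

noncomputable def hh (t : ℝ) : ℂ := ((t / Real.log t : ℝ) : ℂ)
noncomputable def hd (t : ℝ) : ℂ := ((1/Real.log t - 1/(Real.log t)^2 : ℝ) : ℂ)
noncomputable def ρ (w : ℂ) (t : ℝ) : ℂ := φ w t * ((((Real.log t)^2)⁻¹ : ℝ) : ℂ)
noncomputable def Ψ (w : ℂ) (t : ℝ) : ℂ := φ (w+1) t * (((Real.log t)⁻¹ : ℝ) : ℂ) / (w + 1)
noncomputable def Ψd (w : ℂ) (t : ℝ) : ℂ := φ w t * (((Real.log t)⁻¹ : ℝ) : ℂ) - (w+1)⁻¹ * ρ w t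

lemma hasDerivAt_hh {t : ℝ} (ht : 3 ≤ t) : HasDerivAt hh (hd t) t := by
  have hl := log_pos' ht
  have h1 : HasDerivAt (fun t : ℝ => t / Real.log t)
      ((1 * Real.log t - t * t⁻¹) / (Real.log t) ^ 2) t :=
    (hasDerivAt_id t).div (Real.hasDerivAt_log (tpos ht).ne') hl.ne'
  have h2 := h1.ofReal_comp (z := t)
  have h3 : (1 * Real.log t - t * t⁻¹) / (Real.log t)^2 = 1/Real.log t - 1/(Real.log t)^2 := by
    rw [mul_inv_cancel₀ (tpos ht).ne']
    field_simp
  rw [h3] at h2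
  exact h2

lemma hasDerivAt_Ψ {w : ℂ} (hw : w + 1 ≠ 0) {t : ℝ} (ht : 3 ≤ t) :
    HasDerivAt (Ψ w) (Ψd w t) t := by
  have hl := log_pos' ht
  have h0 := tpos ht
  have h1 : HasDerivAt (fun t : ℝ => (((Real.log t)⁻¹ : ℝ) : ℂ)) ((-(t⁻¹) / (Real.log t)^2 : ℝ)) t :=
    (((Real.hasDerivAt_log h0.ne').inv hl.ne')).ofReal_comp
  have h2 := ((hasDerivAt_φ (w+1) h0).mul h1).div_const (w+1)
  convert h2 using 1
  · rfl
  · rfl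
  rw [Ψd, φ', ρ, φ_add_one w h0]
  have : ((-(t⁻¹) / (Real.log t)^2 : ℝ) : ℂ) = -((t:ℂ)⁻¹) / ((Real.log t : ℂ))^2 := by push_cast; ring
  rw [this]
  have hlc : ((Real.log t : ℝ) : ℂ) ≠ 0 := by exact_mod_cast hl.ne'
  have htc : ((t : ℝ) : ℂ) ≠ 0 := by exact_mod_cast (tpos ht).ne'
  rw [eq_div_iff hw]
  push_cast
  field_simp
  ring

lemma phi_hd_eq {w : ℂ} (hw : w + 1 ≠ 0) {t : ℝ} (ht : 3 ≤ t) :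
    φ w t * hd t = Ψd w t - (w / (w+1)) * ρ w t := by
  have hl := log_pos' ht
  rw [hd, Ψd, ρ]
  have : ((1/Real.log t - 1/(Real.log t)^2 : ℝ) : ℂ)
      = (((Real.log t)⁻¹ : ℝ) : ℂ) - ((((Real.log t)^2)⁻¹ : ℝ) : ℂ) := by push_cast; ring
  rw [this]
  have key : (w+1)⁻¹ + w/(w+1) = 1 := by field_simp; ring
  linear_combination (φ w t * ((((Real.log t)^2)⁻¹ : ℝ) : ℂ)) * key


lemma phi_cos (s σ : ℝ) {t : ℝ} (ht : 0 < t) :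
    (φ (-(σ:ℂ) + s*Complex.I) t + φ (-(σ:ℂ) - s*Complex.I) t) / 2
      = ((Real.cos (s * Real.log t) * t ^ (-σ) : ℝ) : ℂ) := by
  have h0 : ∀ x : ℝ, Complex.exp ((x:ℝ) * Complex.I)
      = (Real.cos x : ℂ) + (Real.sin x : ℂ) * Complex.I := by
    intro x
    rw [Complex.exp_mul_I]
    norm_cast
  rw [φ, φ]
  have e1 : (Real.log t : ℂ) * (-(σ:ℂ) + s*Complex.I)
      = ((Real.log t * -σ : ℝ) : ℂ) + ((s * Real.log t : ℝ):ℂ) * Complex.I := by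
    push_cast; ring
  have e2 : (Real.log t : ℂ) * (-(σ:ℂ) - s*Complex.I)
      = ((Real.log t * -σ : ℝ) : ℂ) + ((-(s * Real.log t) : ℝ):ℂ) * Complex.I := by
    push_cast; ring
  rw [e1, e2, Complex.exp_add, Complex.exp_add, h0, h0, Real.rpow_def_of_pos ht,
    show Complex.exp ((Real.log t * -σ:ℝ):ℂ) = ((Real.exp (Real.log t * -σ):ℝ):ℂ) by
      rw [Complex.ofReal_exp]]
  push_cast [Real.cos_neg, Real.sin_neg]
  ring

lemma norm_φ' (w : ℂ) {t : ℝ} (ht : 0 < t) : ‖φ' w t‖ = t ^ w.re * ‖w‖ / t := by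
  rw [φ', norm_div, norm_mul, norm_φ w ht, Complex.norm_real, Real.norm_eq_abs,
    abs_of_pos ht]

lemma norm_φ'_le (w : ℂ) {t : ℝ} (ht : 3 ≤ t) : ‖φ' w t‖ ≤ ‖w‖ * t ^ w.re := by
  rw [norm_φ' w (tpos ht), mul_comm]
  exact div_le_self (by positivity) (by linarith)

lemma integrableOn_of_bound {F : ℝ → ℂ} {a C r : ℝ} (ha : 3 ≤ a) (hr : r < -1)
    (hF : AEStronglyMeasurable F (volume.restrict (Set.Ioi a)))
    (hb : ∀ t ∈ Set.Ioi a, ‖F t‖ ≤ C * t ^ r) :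
    IntegrableOn F (Set.Ioi a) volume := by
  refine Integrable.mono' (((integrableOn_Ioi_rpow_of_lt hr (by linarith : (0:ℝ) < a))).const_mul C)
    hF ?_
  exact (ae_restrict_iff' measurableSet_Ioi).mpr (Filter.Eventually.of_forall hb)

lemma logsq_deriv {a : ℝ} (ha : 3 ≤ a) :
    ∀ x ∈ Set.Ici a, HasDerivAt (fun t : ℝ => -(Real.log t)⁻¹) ((x * (Real.log x)^2)⁻¹) x := by
  intro x hx
  have hx3 : (3:ℝ) ≤ x := le_trans ha hx
  have h := ((Real.hasDerivAt_log (tpos hx3).ne').inv (log_pos' hx3).ne').neg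
  convert h using 1
  · rfl
  · rfl
  · rfl
  field_simp

lemma logsq_tendsto : Tendsto (fun t : ℝ => -(Real.log t)⁻¹) atTop (nhds 0) := by
  rw [show (0:ℝ) = -0 by norm_num]
  exact (Real.tendsto_log_atTop.inv_tendsto_atTop).neg

lemma integrableOn_inv_mul_logsq {a : ℝ} (ha : 3 ≤ a) :
    IntegrableOn (fun t : ℝ => (t * (Real.log t)^2)⁻¹) (Set.Ioi a) volume := by
  refine integrableOn_Ioi_deriv_of_nonneg' (logsq_deriv ha) (fun x hx => ?_) logsq_tendsto
  have hx3 : (3:ℝ) ≤ x := le_of_lt (lt_of_le_of_lt ha hx)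
  positivity

lemma integral_inv_mul_logsq {a : ℝ} (ha : 3 ≤ a) :
    ∫ t in Set.Ioi a, (t * (Real.log t)^2)⁻¹ = (Real.log a)⁻¹ := by
  rw [integral_Ioi_of_hasDerivAt_of_nonneg' (logsq_deriv ha) (fun x hx => ?_) logsq_tendsto]
  · ring
  · have hx3 : (3:ℝ) ≤ x := le_of_lt (lt_of_le_of_lt ha hx)
    positivity


lemma continuousOn_φ (w : ℂ) : ContinuousOn (φ w) {t : ℝ | t ≠ 0} := by
  refine Complex.continuous_exp.comp_continuousOn ?_
  exact ((Complex.continuous_ofReal.comp_continuousOn Real.continuousOn_log).mul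
    continuousOn_const)

lemma continuousOn_φ' (w : ℂ) : ContinuousOn (φ' w) {t : ℝ | t ≠ 0} := by
  refine (((continuousOn_φ w).mul continuousOn_const).div
    (Complex.continuous_ofReal.continuousOn) ?_)
  intro t ht
  exact_mod_cast ht

lemma abel_tendsto {g : ℕ → ℂ} {w : ℂ} {C : ℝ} (hw1 : w.re < -1) {m : ℕ} (hm : 3 ≤ (m:ℝ))
    (HC : ∀ t : ℝ, (m:ℝ) ≤ t → ‖primeSum g t‖ ≤ C * t) :
    Tendsto (fun N : ℕ => ∑ k ∈ Finset.Ioc m N, φ w k * c g k) atTop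
      (nhds (-(φ w m * primeSum g (m:ℝ)) - ∫ t in Set.Ioi (m:ℝ), φ' w t * primeSum g t)) := by
  have hC0 : 0 ≤ C := by
    have h1 := HC (m:ℝ) le_rfl
    have h2 : (0:ℝ) ≤ ‖primeSum g (m:ℝ)‖ := norm_nonneg _
    nlinarith [tpos hm]
  -- integrability on the tail
  have hmeas : Measurable fun t : ℝ => φ' w t * primeSum g t :=
    (measurable_φ' w).mul (measurable_primeSum g)
  have hbound : ∀ t ∈ Set.Ioi (m:ℝ), ‖φ' w t * primeSum g t‖ ≤ (‖w‖ * C) * t ^ w.re := by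
    intro t ht
    have ht3 : (3:ℝ) ≤ t := le_trans hm (le_of_lt ht)
    have h0 : (0:ℝ) < t := tpos ht3
    rw [norm_mul, norm_φ' w h0]
    calc t ^ w.re * ‖w‖ / t * ‖primeSum g t‖ ≤ t ^ w.re * ‖w‖ / t * (C * t) := by
          refine mul_le_mul_of_nonneg_left (HC t (le_of_lt ht)) (by positivity)
      _ = (‖w‖ * C) * t ^ w.re := by field_simp
  have hInt : IntegrableOn (fun t => φ' w t * primeSum g t) (Set.Ioi (m:ℝ)) volume :=
    integrableOn_of_bound hm hw1 hmeas.aestronglyMeasurable hbound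
  -- the identity for each `N ≥ m`
  have hId : ∀ N : ℕ, m ≤ N →
      ∑ k ∈ Finset.Ioc m N, φ w k * c g k =
        φ w N * primeSum g (N:ℝ) - φ w m * primeSum g (m:ℝ) -
          ∫ t in Set.Ioc (m:ℝ) (N:ℝ), φ' w t * primeSum g t := by
    intro N hN
    have hmN : (m:ℝ) ≤ (N:ℝ) := by exact_mod_cast hN
    have hdiff : ∀ t ∈ Set.Icc (m:ℝ) (N:ℝ), DifferentiableAt ℝ (φ w) t := by
      intro t ht
      exact (hasDerivAt_φ w (tpos (le_trans hm ht.1))).differentiableAt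
    have hderiv_eq : ∀ t ∈ Set.Icc (m:ℝ) (N:ℝ), deriv (φ w) t = φ' w t := by
      intro t ht
      exact (hasDerivAt_φ w (tpos (le_trans hm ht.1))).deriv
    have hint : IntegrableOn (deriv (φ w)) (Set.Icc (m:ℝ) (N:ℝ)) volume := by
      rw [integrableOn_congr_fun hderiv_eq measurableSet_Icc]
      refine ((continuousOn_φ' w).mono ?_).integrableOn_Icc
      intro t ht
      exact (tpos (le_trans hm ht.1)).ne'
    have key := sum_mul_eq_sub_sub_integral_mul (c g) (by positivity : (0:ℝ) ≤ (m:ℝ)) hmN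
      hdiff hint
    rw [Nat.floor_natCast, Nat.floor_natCast] at key
    have e : ∀ n : ℕ, primeSum g (n:ℝ) = ∑ k ∈ Finset.Icc 0 n, c g k := by
      intro n; rw [primeSum_eq, Nat.floor_natCast]
    rw [key, e, e]
    congr 1
    refine setIntegral_congr_fun measurableSet_Ioc (fun t ht => ?_)
    rw [(hasDerivAt_φ w (tpos (le_trans hm (le_of_lt ht.1)))).deriv, ← primeSum_eq]
  -- limit of the boundary term
  have T1 : Tendsto (fun N : ℕ => φ w N * primeSum g (N:ℝ)) atTop (nhds 0) := by
    have hlim : Tendsto (fun N : ℕ => C * (N:ℝ) ^ (w.re + 1)) atTop (nhds (C * 0)) := by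
      refine Tendsto.const_mul C ?_
      have := tendsto_rpow_neg_atTop (by linarith : (0:ℝ) < -(w.re + 1))
      rw [neg_neg] at this
      exact this.comp tendsto_natCast_atTop_atTop
    rw [mul_zero] at hlim
    refine squeeze_zero_norm' ?_ hlim
    filter_upwards [eventually_ge_atTop m] with N hN
    have h3 : (3:ℝ) ≤ (N:ℝ) := le_trans hm (by exact_mod_cast hN)
    have h0 : (0:ℝ) < N := tpos h3
    rw [norm_mul, norm_φ w h0]
    calc (N:ℝ) ^ w.re * ‖primeSum g (N:ℝ)‖ ≤ (N:ℝ) ^ w.re * (C * N) :=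
          mul_le_mul_of_nonneg_left (HC _ (by exact_mod_cast hN)) (by positivity)
      _ = C * (N:ℝ) ^ (w.re + 1) := by rw [Real.rpow_add_one h0.ne']; ring
  -- limit of the integral term
  have T2 : Tendsto (fun N : ℕ => ∫ t in Set.Ioc (m:ℝ) (N:ℝ), φ' w t * primeSum g t) atTop
      (nhds (∫ t in Set.Ioi (m:ℝ), φ' w t * primeSum g t)) := by
    have hU : (⋃ N : ℕ, Set.Ioc (m:ℝ) (N:ℝ)) = Set.Ioi (m:ℝ) := by
      ext x
      simp only [Set.mem_iUnion, Set.mem_Ioc, Set.mem_Ioi]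
      constructor
      · rintro ⟨N, h1, _⟩; exact h1
      · intro hx
        obtain ⟨N, hN⟩ := exists_nat_ge x
        exact ⟨N, hx, hN⟩
    have hmono : Monotone (fun N : ℕ => Set.Ioc (m:ℝ) (N:ℝ)) := by
      intro i j hij
      exact Set.Ioc_subset_Ioc le_rfl (by exact_mod_cast hij)
    have h := tendsto_setIntegral_of_monotone (fun N : ℕ => measurableSet_Ioc) hmono
      (hU ▸ hInt)
    rwa [hU] at h
  have := (T1.sub (tendsto_const_nhds (x := φ w (m:ℝ) * primeSum g (m:ℝ)))).sub T2
  rw [zero_sub] at this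
  refine Tendsto.congr' ?_ this
  filter_upwards [eventually_ge_atTop m] with N hN
  exact (hId N hN).symm


section IBP

variable {w : ℂ} {a : ℝ}

lemma measurable_hh : Measurable hh :=
  Complex.measurable_ofReal.comp (measurable_id.div Real.measurable_log)

lemma measurable_ρ (w : ℂ) : Measurable (ρ w) :=
  (measurable_φ w).mul (Complex.measurable_ofReal.comp ((Real.measurable_log.pow_const 2).inv))

lemma norm_hh {t : ℝ} (ht : 3 ≤ t) : ‖hh t‖ = t / Real.log t := by
  have h := div_pos (tpos ht) (log_pos' ht)
  rw [hh, Complex.norm_real, Real.norm_eq_abs, abs_of_pos h]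

lemma rpow_re_le_inv {t : ℝ} (ht : 3 ≤ t) (hw1 : w.re ≤ -1) : t ^ w.re ≤ t⁻¹ := by
  have := Real.rpow_le_rpow_of_exponent_le (by linarith : (1:ℝ) ≤ t) hw1
  rwa [Real.rpow_neg_one] at this

lemma norm_ρ {t : ℝ} (ht : 3 ≤ t) (w : ℂ) :
    ‖ρ w t‖ = t ^ w.re * ((Real.log t)^2)⁻¹ := by
  rw [ρ, norm_mul, norm_φ w (tpos ht), Complex.norm_real, Real.norm_eq_abs,
    abs_of_pos (inv_pos.mpr (pow_pos (log_pos' ht) 2))]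

lemma logsq_inv_le_one {t : ℝ} (ht : 3 ≤ t) : ((Real.log t)^2)⁻¹ ≤ 1 := by
  have h1 := one_le_log ht
  rw [inv_le_one_iff₀]
  right
  nlinarith

lemma integrableOn_ρ (hw1 : w.re < -1) (ha : 3 ≤ a) :
    IntegrableOn (ρ w) (Set.Ioi a) volume := by
  refine integrableOn_of_bound (C := 1) ha hw1 (measurable_ρ w).aestronglyMeasurable
    (fun t ht => ?_)
  have ht3 : (3:ℝ) ≤ t := le_trans ha (le_of_lt ht)
  rw [norm_ρ ht3, one_mul]
  calc t ^ w.re * ((Real.log t)^2)⁻¹ ≤ t ^ w.re * 1 :=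
        mul_le_mul_of_nonneg_left (logsq_inv_le_one ht3) (by positivity)
    _ = t ^ w.re := mul_one _

lemma norm_integral_ρ_le (hw1 : w.re < -1) (ha : 3 ≤ a) :
    ‖∫ t in Set.Ioi a, ρ w t‖ ≤ (Real.log a)⁻¹ := by
  rw [← integral_inv_mul_logsq ha]
  refine norm_integral_le_of_norm_le (integrableOn_inv_mul_logsq ha) ?_
  refine (ae_restrict_iff' measurableSet_Ioi).mpr (Filter.Eventually.of_forall fun t ht => ?_)
  have ht3 : (3:ℝ) ≤ t := le_trans ha (le_of_lt ht)
  rw [norm_ρ ht3, mul_inv]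
  exact mul_le_mul_of_nonneg_right (rpow_re_le_inv ht3 hw1.le) (by positivity)

lemma integrableOn_ψd (hw1 : w.re < -1) (ha : 3 ≤ a) :
    IntegrableOn (Ψd w) (Set.Ioi a) volume := by
  refine Integrable.sub ?_ ((integrableOn_ρ hw1 ha).const_mul _)
  refine integrableOn_of_bound (C := 1) ha hw1
    ((measurable_φ w).mul
      (Complex.measurable_ofReal.comp Real.measurable_log.inv)).aestronglyMeasurable
    (fun t ht => ?_)
  have ht3 : (3:ℝ) ≤ t := le_trans ha (le_of_lt ht)
  rw [norm_mul, norm_φ w (tpos ht3), one_mul, Complex.norm_real, Real.norm_eq_abs,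
    abs_of_pos (inv_pos.mpr (log_pos' ht3))]
  calc t ^ w.re * (Real.log t)⁻¹ ≤ t ^ w.re * 1 := by
        refine mul_le_mul_of_nonneg_left ?_ (by positivity)
        rw [inv_le_one_iff₀]; right; exact one_le_log ht3
    _ = t ^ w.re := mul_one _

lemma norm_Ψ_le (hw1 : w.re < -1) {t : ℝ} (ht : 3 ≤ t) :
    ‖Ψ w t‖ ≤ (Real.log t)⁻¹ / ‖w + 1‖ := by
  have hl : (0:ℝ) < (Real.log t)⁻¹ := inv_pos.mpr (log_pos' ht)
  rw [Ψ, norm_div, norm_mul, norm_φ (w+1) (tpos ht), Complex.norm_real, Real.norm_eq_abs,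
    abs_of_pos hl, Complex.add_re, Complex.one_re]
  have h1 : t ^ (w.re + 1) ≤ 1 :=
    Real.rpow_le_one_of_one_le_of_nonpos (by linarith) (by linarith)
  have h2 : t ^ (w.re + 1) * (Real.log t)⁻¹ ≤ (Real.log t)⁻¹ := mul_le_of_le_one_left hl.le h1
  rw [div_eq_mul_inv, div_eq_mul_inv]
  exact mul_le_mul_of_nonneg_right h2 (by positivity)

lemma integral_ψd (hw1 : w.re < -1) (hwne : w + 1 ≠ 0) (ha : 3 ≤ a) :
    ∫ t in Set.Ioi a, Ψd w t = -(Ψ w a) := by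
  have hT : Tendsto (Ψ w) atTop (nhds 0) := by
    have hlim : Tendsto (fun t : ℝ => (1/‖w+1‖) * t ^ (w.re + 1)) atTop (nhds ((1/‖w+1‖) * 0)) := by
      refine Tendsto.const_mul _ ?_
      have := tendsto_rpow_neg_atTop (by linarith : (0:ℝ) < -(w.re + 1))
      rwa [neg_neg] at this
    rw [mul_zero] at hlim
    refine squeeze_zero_norm' ?_ hlim
    filter_upwards [eventually_ge_atTop (3:ℝ)] with t ht
    rw [Ψ, norm_div, norm_mul, norm_φ (w+1) (tpos ht), Complex.norm_real, Real.norm_eq_abs,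
      abs_of_pos (inv_pos.mpr (log_pos' ht)), Complex.add_re, Complex.one_re]
    rw [div_eq_mul_inv, one_div]
    calc t ^ (w.re + 1) * (Real.log t)⁻¹ * ‖w + 1‖⁻¹
        ≤ t ^ (w.re + 1) * 1 * ‖w + 1‖⁻¹ := by
          refine mul_le_mul_of_nonneg_right (mul_le_mul_of_nonneg_left ?_ (by positivity))
            (by positivity)
          rw [inv_le_one_iff₀]; right; exact one_le_log ht
      _ = ‖w + 1‖⁻¹ * t ^ (w.re + 1) := by ring
  have := integral_Ioi_of_hasDerivAt_of_tendsto'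
    (fun x hx => hasDerivAt_Ψ hwne (le_trans ha hx)) (integrableOn_ψd hw1 ha) hT
  rw [this, zero_sub]


lemma integrableOn_φ_hd (hw1 : w.re < -1) (hwne : w + 1 ≠ 0) (ha : 3 ≤ a) :
    IntegrableOn (fun t => φ w t * hd t) (Set.Ioi a) volume := by
  refine IntegrableOn.congr_fun
    ((integrableOn_ψd hw1 ha).sub ((integrableOn_ρ hw1 ha).const_mul (w/(w+1)))) ?_
    measurableSet_Ioi
  intro t ht
  exact (phi_hd_eq hwne (le_trans ha (le_of_lt ht))).symm

lemma norm_integral_φ_hd (hw1 : w.re < -1) (hwne : w + 1 ≠ 0) (ha : 3 ≤ a) :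
    ‖∫ t in Set.Ioi a, φ w t * hd t‖ ≤ (1 + ‖w‖) / ‖w + 1‖ * (Real.log a)⁻¹ := by
  have heq : ∫ t in Set.Ioi a, φ w t * hd t
      = ∫ t in Set.Ioi a, (Ψd w t - (w/(w+1)) * ρ w t) :=
    setIntegral_congr_fun measurableSet_Ioi
      (fun t ht => phi_hd_eq hwne (le_trans ha (le_of_lt ht)))
  rw [heq, integral_sub (integrableOn_ψd hw1 ha) ((integrableOn_ρ hw1 ha).const_mul _),
    MeasureTheory.integral_const_mul, integral_ψd hw1 hwne ha]
  calc ‖-(Ψ w a) - w / (w + 1) * ∫ t in Set.Ioi a, ρ w t‖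
      ≤ ‖Ψ w a‖ + ‖w / (w+1)‖ * ‖∫ t in Set.Ioi a, ρ w t‖ := by
        refine (norm_sub_le _ _).trans ?_
        rw [norm_neg, norm_mul]
    _ ≤ (Real.log a)⁻¹ / ‖w + 1‖ + ‖w‖ / ‖w + 1‖ * (Real.log a)⁻¹ := by
        refine add_le_add (norm_Ψ_le hw1 ha) ?_
        rw [norm_div]
        exact mul_le_mul_of_nonneg_left (norm_integral_ρ_le hw1 ha) (by positivity)
    _ = (1 + ‖w‖) / ‖w + 1‖ * (Real.log a)⁻¹ := by ring

lemma integrableOn_φ'_hh (hw1 : w.re < -1) (ha : 3 ≤ a) :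
    IntegrableOn (fun t => φ' w t * hh t) (Set.Ioi a) volume := by
  refine integrableOn_of_bound (C := ‖w‖) ha hw1
    ((measurable_φ' w).mul measurable_hh).aestronglyMeasurable (fun t ht => ?_)
  have ht3 : (3:ℝ) ≤ t := le_trans ha (le_of_lt ht)
  have hL := one_le_log ht3
  have h0 := tpos ht3
  rw [norm_mul, norm_hh ht3, norm_φ' w h0]
  have e : t ^ w.re * ‖w‖ / t * (t / Real.log t) = ‖w‖ * t ^ w.re / Real.log t := by
    field_simp
  rw [e]
  exact div_le_self (by positivity) hL

lemma main_term_bound (hw1 : w.re < -1) (hwne : w + 1 ≠ 0) (ha : 3 ≤ a) :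
    ‖φ w a * hh a + ∫ t in Set.Ioi a, φ' w t * hh t‖
      ≤ (1 + ‖w‖) / ‖w + 1‖ * (Real.log a)⁻¹ := by
  have Iφ'h := integrableOn_φ'_hh hw1 ha
  have Iφhd := integrableOn_φ_hd hw1 hwne ha
  have hF : ∀ x ∈ Set.Ici a, HasDerivAt (fun t => φ w t * hh t)
      (φ' w x * hh x + φ w x * hd x) x := by
    intro x hx
    exact (hasDerivAt_φ w (tpos (le_trans ha hx))).mul (hasDerivAt_hh (le_trans ha hx))
  have hT : Tendsto (fun t => φ w t * hh t) atTop (nhds 0) := by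
    have hlim : Tendsto (fun t : ℝ => t ^ (w.re + 1)) atTop (nhds 0) := by
      have := tendsto_rpow_neg_atTop (by linarith : (0:ℝ) < -(w.re + 1))
      rwa [neg_neg] at this
    refine squeeze_zero_norm' ?_ hlim
    filter_upwards [eventually_ge_atTop (3:ℝ)] with t ht
    rw [norm_mul, norm_hh ht, norm_φ w (tpos ht)]
    have e : t ^ w.re * (t / Real.log t) = t ^ (w.re + 1) / Real.log t := by
      rw [Real.rpow_add_one (tpos ht).ne']
      ring
    rw [e]
    exact div_le_self (by positivity) (one_le_log ht)
  have key := integral_Ioi_of_hasDerivAt_of_tendsto' hF (Iφ'h.add Iφhd) hT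
  rw [integral_add Iφ'h Iφhd, zero_sub] at key
  have e2 : φ w a * hh a + (∫ t in Set.Ioi a, φ' w t * hh t)
      = -∫ t in Set.Ioi a, φ w t * hd t := by
    linear_combination key
  rw [e2, norm_neg]
  exact norm_integral_φ_hd hw1 hwne ha

end IBP


noncomputable def EE (θ : ℂ) (g : ℕ → ℂ) (t : ℝ) : ℂ := primeSum g t - θ * hh t

lemma measurable_EE (θ : ℂ) (g : ℕ → ℂ) : Measurable (EE θ g) :=
  (measurable_primeSum g).sub (measurable_hh.const_mul θ)

lemma rpow_sub_one_le {t : ℝ} (ht : 3 ≤ t) {r : ℝ} (hr : r < -1) :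
    t ^ r / t ≤ (t^2)⁻¹ := by
  have h0 := tpos ht
  have h1 : t ^ r / t = t ^ (r - 1) := by
    rw [Real.rpow_sub h0, Real.rpow_one]
  rw [h1]
  have h2 : t ^ (r - 1) ≤ t ^ (-2 : ℝ) :=
    Real.rpow_le_rpow_of_exponent_le (by linarith) (by linarith)
  refine h2.trans_eq ?_
  rw [show (-2 : ℝ) = -(2:ℝ) by norm_num, Real.rpow_neg h0.le, ← Real.rpow_natCast t 2]
  norm_num

lemma integrableOn_φ'_EE {θ : ℂ} {g : ℕ → ℂ} {w : ℂ} {a : ℝ} (hw1 : w.re < -1) (ha : 3 ≤ a)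
    (hEint : IntegrableOn (fun t => ‖EE θ g t‖ / t^2) (Set.Ioi a) volume) :
    IntegrableOn (fun t => φ' w t * EE θ g t) (Set.Ioi a) volume := by
  refine Integrable.mono' (hEint.const_mul ‖w‖)
    (((measurable_φ' w).mul (measurable_EE θ g)).aestronglyMeasurable) ?_
  refine (ae_restrict_iff' measurableSet_Ioi).mpr (Filter.Eventually.of_forall fun t ht => ?_)
  have ht3 : (3:ℝ) ≤ t := le_trans ha (le_of_lt ht)
  rw [norm_mul, norm_φ' w (tpos ht3)]
  calc t ^ w.re * ‖w‖ / t * ‖EE θ g t‖ = (t ^ w.re / t) * (‖w‖ * ‖EE θ g t‖) := by ring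
    _ ≤ (t^2)⁻¹ * (‖w‖ * ‖EE θ g t‖) :=
        mul_le_mul_of_nonneg_right (rpow_sub_one_le ht3 hw1) (by positivity)
    _ = ‖w‖ * (‖EE θ g t‖ / t^2) := by ring

lemma norm_integral_φ'_EE {θ : ℂ} {g : ℕ → ℂ} {w : ℂ} {a : ℝ} (hw1 : w.re < -1) (ha : 3 ≤ a)
    (hEint : IntegrableOn (fun t => ‖EE θ g t‖ / t^2) (Set.Ioi a) volume) :
    ‖∫ t in Set.Ioi a, φ' w t * EE θ g t‖ ≤ ‖w‖ * ∫ t in Set.Ioi a, ‖EE θ g t‖ / t^2 := by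
  rw [← MeasureTheory.integral_const_mul]
  refine norm_integral_le_of_norm_le (hEint.const_mul ‖w‖) ?_
  refine (ae_restrict_iff' measurableSet_Ioi).mpr (Filter.Eventually.of_forall fun t ht => ?_)
  have ht3 : (3:ℝ) ≤ t := le_trans ha (le_of_lt ht)
  rw [norm_mul, norm_φ' w (tpos ht3)]
  calc t ^ w.re * ‖w‖ / t * ‖EE θ g t‖ = (t ^ w.re / t) * (‖w‖ * ‖EE θ g t‖) := by ring
    _ ≤ (t^2)⁻¹ * (‖w‖ * ‖EE θ g t‖) :=
        mul_le_mul_of_nonneg_right (rpow_sub_one_le ht3 hw1) (by positivity)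
    _ = ‖w‖ * (‖EE θ g t‖ / t^2) := by ring

lemma Vw_bound {θ : ℂ} {g : ℕ → ℂ} {w : ℂ} {a : ℝ} (hw1 : w.re < -1)
    (hwne : w + 1 ≠ 0) (ha : 3 ≤ a)
    (hEint : IntegrableOn (fun t => ‖EE θ g t‖ / t^2) (Set.Ioi a) volume) :
    ‖-(φ w a * primeSum g a) - ∫ t in Set.Ioi a, φ' w t * primeSum g t‖
      ≤ ‖EE θ g a‖ / a + ‖w‖ * (∫ t in Set.Ioi a, ‖EE θ g t‖ / t^2)
        + ‖θ‖ * ((1 + ‖w‖) / ‖w + 1‖ * (Real.log a)⁻¹) := by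
  have IEE := integrableOn_φ'_EE hw1 ha hEint
  have Ih := integrableOn_φ'_hh (w := w) hw1 ha
  have hsplit : ∫ t in Set.Ioi a, φ' w t * primeSum g t
      = (∫ t in Set.Ioi a, φ' w t * EE θ g t) + θ * ∫ t in Set.Ioi a, φ' w t * hh t := by
    rw [← MeasureTheory.integral_const_mul, ← integral_add IEE (Ih.const_mul θ)]
    refine setIntegral_congr_fun measurableSet_Ioi (fun t ht => ?_)
    rw [EE]
    ring
  have hπa : primeSum g a = EE θ g a + θ * hh a := by rw [EE]; ring
  rw [hsplit, hπa]
  have e : -(φ w a * (EE θ g a + θ * hh a)) -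
      ((∫ t in Set.Ioi a, φ' w t * EE θ g t) + θ * ∫ t in Set.Ioi a, φ' w t * hh t)
      = (-(φ w a * EE θ g a) - (∫ t in Set.Ioi a, φ' w t * EE θ g t))
        - θ * (φ w a * hh a + ∫ t in Set.Ioi a, φ' w t * hh t) := by ring
  rw [e]
  refine (norm_sub_le _ _).trans ?_
  refine add_le_add ((norm_sub_le _ _).trans (add_le_add ?_ ?_)) ?_
  · rw [norm_neg, norm_mul, norm_φ w (tpos ha)]
    rw [div_eq_inv_mul]
    exact mul_le_mul_of_nonneg_right (rpow_re_le_inv ha hw1.le) (norm_nonneg _)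
  · exact norm_integral_φ'_EE hw1 ha hEint
  · rw [norm_mul]
    exact mul_le_mul_of_nonneg_left (main_term_bound hw1 hwne ha) (norm_nonneg _)

lemma tail_tendsto {F : ℝ → ℝ}
    (hint : IntegrableOn F (Set.Ioi 2) volume) :
    Tendsto (fun x : ℝ => ∫ t in Set.Ioi x, F t) atTop (nhds 0) := by
  have h1 := intervalIntegral_tendsto_integral_Ioi 2 hint tendsto_id
  have h2 : Tendsto (fun x : ℝ => (∫ t in Set.Ioi (2:ℝ), F t) - ∫ t in (2:ℝ)..x, F t) atTop
      (nhds ((∫ t in Set.Ioi (2:ℝ), F t) - ∫ t in Set.Ioi (2:ℝ), F t)) :=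
    tendsto_const_nhds.sub h1
  rw [sub_self] at h2
  refine Tendsto.congr' ?_ h2
  filter_upwards [eventually_ge_atTop (2:ℝ)] with x hx
  have hunion : Set.Ioc (2:ℝ) x ∪ Set.Ioi x = Set.Ioi (2:ℝ) := Set.Ioc_union_Ioi_eq_Ioi hx
  have hdisj : Disjoint (Set.Ioc (2:ℝ) x) (Set.Ioi x) := by
    refine Set.disjoint_left.mpr (fun t ht1 ht2 => ?_)
    exact absurd ht2 (not_lt.mpr ht1.2)
  have := setIntegral_union hdisj measurableSet_Ioi
    (hint.mono_set (by rw [← hunion]; exact Set.subset_union_left))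
    (hint.mono_set (by rw [← hunion]; exact Set.subset_union_right))
  rw [hunion] at this
  rw [intervalIntegral.integral_of_le hx, this]
  ring



lemma key {θ : ℂ} {g : ℕ → ℂ} {δ R C : ℝ} (hδ : 0 < δ) (y s : ℝ) (hy : 3 ≤ y)
    (hs1 : δ ≤ |s|) (hs2 : |s| ≤ R)
    (HC : ∀ t : ℝ, ((⌊y⌋₊ : ℕ) : ℝ) ≤ t → ‖primeSum g t‖ ≤ C * t)
    (hEint : IntegrableOn (fun t => ‖EE θ g t‖ / t^2) (Set.Ioi ((⌊y⌋₊ : ℕ) : ℝ)) volume) :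
    ‖∑' p : {p : ℕ // p.Prime ∧ y < p},
        g p * ((Real.cos (s * Real.log p) *
          ((p : ℕ) : ℝ) ^ (-(1 + 1 / Real.log y)) : ℝ) : ℂ)‖
      ≤ ‖EE θ g ((⌊y⌋₊ : ℕ) : ℝ)‖ / ((⌊y⌋₊ : ℕ) : ℝ)
        + (2 + R) * (∫ t in Set.Ioi ((⌊y⌋₊ : ℕ) : ℝ), ‖EE θ g t‖ / t^2)
        + ‖θ‖ * ((3 + R) / δ * (Real.log ((⌊y⌋₊ : ℕ) : ℝ))⁻¹) := by
  have hy0 : (0:ℝ) ≤ y := by linarith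
  set m : ℕ := ⌊y⌋₊ with hm
  have hm3 : (3:ℝ) ≤ (m:ℝ) := by
    have : (3:ℕ) ≤ m := Nat.le_floor (by exact_mod_cast hy)
    exact_mod_cast this
  set σ : ℝ := 1 + 1 / Real.log y with hσ
  have hlogy : 1 ≤ Real.log y := one_le_log hy
  have hσ1 : 1 < σ := by
    have h : 0 < 1 / Real.log y := by positivity
    simp only [hσ]; linarith
  have hσ2 : σ ≤ 2 := by
    have h : 1 / Real.log y ≤ 1 := by
      rw [div_le_one (by linarith)]; exact hlogy
    simp only [hσ]; linarith
  have hsne : s ≠ 0 := fun h => by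
    rw [h, abs_zero] at hs1; linarith
  set w : ℂ := -(σ:ℂ) + s * Complex.I with hwdef
  set w' : ℂ := -(σ:ℂ) - s * Complex.I with hw'def
  have hwre : w.re = -σ := by simp [hwdef]
  have hw're : w'.re = -σ := by simp [hw'def]
  have hwim : w.im = s := by simp [hwdef]
  have hw'im : w'.im = -s := by simp [hw'def]
  have hw1 : w.re < -1 := by rw [hwre]; linarith
  have hw'1 : w'.re < -1 := by rw [hw're]; linarith
  have hwne : w + 1 ≠ 0 := by
    intro h
    have h2 := congrArg Complex.im h
    rw [Complex.add_im, hwim, Complex.one_im, Complex.zero_im, add_zero] at h2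
    exact hsne h2
  have hw'ne : w' + 1 ≠ 0 := by
    intro h
    have h2 := congrArg Complex.im h
    rw [Complex.add_im, hw'im, Complex.one_im, Complex.zero_im, add_zero] at h2
    exact hsne (neg_eq_zero.mp h2)
  have hnw : ‖w‖ ≤ 2 + R := by
    refine (Complex.norm_le_abs_re_add_abs_im w).trans ?_
    rw [hwre, hwim, abs_neg, abs_of_pos (by linarith : (0:ℝ) < σ)]
    linarith
  have hnw' : ‖w'‖ ≤ 2 + R := by
    refine (Complex.norm_le_abs_re_add_abs_im w').trans ?_
    rw [hw're, hw'im, abs_neg, abs_neg, abs_of_pos (by linarith : (0:ℝ) < σ)]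
    linarith
  have hnw1 : δ ≤ ‖w + 1‖ := by
    refine le_trans ?_ (Complex.abs_im_le_norm (w+1))
    rw [Complex.add_im, hwim, Complex.one_im, add_zero]
    exact hs1
  have hnw'1 : δ ≤ ‖w' + 1‖ := by
    refine le_trans ?_ (Complex.abs_im_le_norm (w'+1))
    rw [Complex.add_im, hw'im, Complex.one_im, add_zero, abs_neg]
    exact hs1
  have hRδ : 0 < R := lt_of_lt_of_le hδ (le_trans hs1 hs2)
  -- limit of the partial sums
  have Tw := abel_tendsto (g := g) (C := C) (m := m) hw1 hm3 HC
  have Tw' := abel_tendsto (g := g) (C := C) (m := m) hw'1 hm3 HC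
  set S : Set ℕ := {n : ℕ | n.Prime ∧ y < (n:ℝ)} with hSdef
  set F : ℕ → ℂ := fun n => g n * ((Real.cos (s * Real.log (n:ℝ)) * (n:ℝ) ^ (-σ) : ℝ) : ℂ)
    with hFdef
  have hsum_eq : ∀ N : ℕ, ∑ n ∈ Finset.range (N+1), S.indicator F n
      = (∑ k ∈ Finset.Ioc m N, φ w k * c g k + ∑ k ∈ Finset.Ioc m N, φ w' k * c g k) / 2 := by
    intro N
    rw [← Finset.sum_add_distrib, Finset.sum_div]
    have hsub : Finset.Ioc m N ⊆ Finset.range (N+1) := by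
      intro k hk
      rw [Finset.mem_range]
      exact Nat.lt_succ_of_le (Finset.mem_Ioc.mp hk).2
    have hzero : ∀ x ∈ Finset.range (N+1), x ∉ Finset.Ioc m N → S.indicator F x = 0 := by
      intro x hx hnot
      have hxN : x ≤ N := Nat.lt_succ_iff.mp (Finset.mem_range.mp hx)
      have hxm : x ≤ m := by
        by_contra hc
        push_neg at hc
        exact hnot (Finset.mem_Ioc.mpr ⟨hc, hxN⟩)
      refine Set.indicator_of_notMem (fun hmem => ?_) F
      have h1 : y < (x:ℝ) := hmem.2
      have h2 : (x:ℝ) ≤ (m:ℝ) := by exact_mod_cast hxm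
      have h3 : (m:ℝ) ≤ y := Nat.floor_le hy0
      linarith
    rw [← Finset.sum_subset hsub hzero]
    refine Finset.sum_congr rfl (fun k hk => ?_)
    have hk1 : m < k := (Finset.mem_Ioc.mp hk).1
    have hky : y < (k:ℝ) := (Nat.floor_lt hy0).mp hk1
    have hk0 : (0:ℝ) < (k:ℝ) := by linarith
    have hcos := phi_cos s σ hk0
    by_cases hp : k.Prime
    · rw [Set.indicator_of_mem (show k ∈ S from ⟨hp, hky⟩)]
      show g k * _ = _
      rw [show c g k = g k from if_pos hp, ← hcos, hwdef, hw'def]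
      ring
    · rw [Set.indicator_of_notMem (fun hmem => hp hmem.1)]
      rw [show c g k = 0 from if_neg hp]
      ring
  have PT : Tendsto (fun N : ℕ => ∑ n ∈ Finset.range (N+1), S.indicator F n) atTop
      (nhds (((-(φ w m * primeSum g (m:ℝ)) - ∫ t in Set.Ioi (m:ℝ), φ' w t * primeSum g t) +
        (-(φ w' m * primeSum g (m:ℝ)) - ∫ t in Set.Ioi (m:ℝ), φ' w' t * primeSum g t)) / 2)) := by
    exact Tendsto.congr (fun N => (hsum_eq N).symm) ((Tw.add Tw').div_const 2)
  -- identify the tsum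
  have hgoal_eq : (∑' p : {p : ℕ // p.Prime ∧ y < (p:ℝ)},
      g p * ((Real.cos (s * Real.log (p:ℝ)) *
        ((p : ℕ) : ℝ) ^ (-(1 + 1 / Real.log y)) : ℝ) : ℂ)) = ∑' n : ℕ, S.indicator F n :=
    tsum_subtype S F
  rw [hgoal_eq]
  -- nonnegativity of the bound
  have hInt0 : 0 ≤ ∫ t in Set.Ioi ((m:ℕ):ℝ), ‖EE θ g t‖ / t^2 :=
    integral_nonneg (fun t => div_nonneg (norm_nonneg _) (sq_nonneg _))
  have hloga : 1 ≤ Real.log (m:ℝ) := one_le_log hm3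
  have hB0 : (0:ℝ) ≤ ‖EE θ g ((m:ℕ):ℝ)‖ / ((m:ℕ):ℝ)
      + (2 + R) * (∫ t in Set.Ioi ((m:ℕ):ℝ), ‖EE θ g t‖ / t^2)
      + ‖θ‖ * ((3 + R) / δ * (Real.log ((m:ℕ):ℝ))⁻¹) := by
    have h1 : (0:ℝ) ≤ ‖EE θ g ((m:ℕ):ℝ)‖ / ((m:ℕ):ℝ) :=
      div_nonneg (norm_nonneg _) (by linarith)
    have h2 : (0:ℝ) ≤ (2 + R) * (∫ t in Set.Ioi ((m:ℕ):ℝ), ‖EE θ g t‖ / t^2) :=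
      mul_nonneg (by linarith) hInt0
    have h3 : (0:ℝ) ≤ ‖θ‖ * ((3 + R) / δ * (Real.log ((m:ℕ):ℝ))⁻¹) := by
      refine mul_nonneg (norm_nonneg _) (mul_nonneg (div_nonneg (by linarith) hδ.le) ?_)
      positivity
    linarith
  by_cases hsumm : Summable (S.indicator F)
  · have h1 := hsumm.hasSum.tendsto_sum_nat
    have h2 := h1.comp (tendsto_add_atTop_nat 1)
    have hVal := tendsto_nhds_unique h2 PT
    rw [hVal]
    -- bound each piece
    have hBw := Vw_bound (θ := θ) hw1 hwne hm3 hEint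
    have hBw' := Vw_bound (θ := θ) hw'1 hw'ne hm3 hEint
    have lift : ∀ u : ℂ, ‖u‖ ≤ 2 + R → δ ≤ ‖u + 1‖ →
        ‖EE θ g ((m:ℕ):ℝ)‖ / ((m:ℕ):ℝ) + ‖u‖ * (∫ t in Set.Ioi ((m:ℕ):ℝ), ‖EE θ g t‖ / t^2)
          + ‖θ‖ * ((1 + ‖u‖) / ‖u + 1‖ * (Real.log ((m:ℕ):ℝ))⁻¹)
        ≤ ‖EE θ g ((m:ℕ):ℝ)‖ / ((m:ℕ):ℝ)
          + (2 + R) * (∫ t in Set.Ioi ((m:ℕ):ℝ), ‖EE θ g t‖ / t^2)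
          + ‖θ‖ * ((3 + R) / δ * (Real.log ((m:ℕ):ℝ))⁻¹) := by
      intro u hu hu1
      have e2 : ‖u‖ * (∫ t in Set.Ioi ((m:ℕ):ℝ), ‖EE θ g t‖ / t^2)
          ≤ (2 + R) * (∫ t in Set.Ioi ((m:ℕ):ℝ), ‖EE θ g t‖ / t^2) :=
        mul_le_mul_of_nonneg_right hu hInt0
      have e3 : ‖θ‖ * ((1 + ‖u‖) / ‖u + 1‖ * (Real.log ((m:ℕ):ℝ))⁻¹)
          ≤ ‖θ‖ * ((3 + R) / δ * (Real.log ((m:ℕ):ℝ))⁻¹) := by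
        refine mul_le_mul_of_nonneg_left (mul_le_mul_of_nonneg_right ?_ (by positivity))
          (norm_nonneg _)
        refine div_le_div₀ (by linarith) (by linarith) hδ hu1
      linarith
    calc ‖(((-(φ w m * primeSum g (m:ℝ)) - ∫ t in Set.Ioi (m:ℝ), φ' w t * primeSum g t) +
        (-(φ w' m * primeSum g (m:ℝ)) - ∫ t in Set.Ioi (m:ℝ), φ' w' t * primeSum g t)) / 2)‖
        ≤ (‖(-(φ w m * primeSum g (m:ℝ)) - ∫ t in Set.Ioi (m:ℝ), φ' w t * primeSum g t)‖ +
           ‖(-(φ w' m * primeSum g (m:ℝ)) - ∫ t in Set.Ioi (m:ℝ), φ' w' t * primeSum g t)‖) / 2 := by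
          rw [norm_div, show ‖(2:ℂ)‖ = 2 by norm_num]
          gcongr
          exact norm_add_le _ _
      _ ≤ _ := by
          have b1 := le_trans hBw (lift w hnw hnw1)
          have b2 := le_trans hBw' (lift w' hnw' hnw'1)
          linarith
  · rw [tsum_eq_zero_of_not_summable hsumm, norm_zero]
    exact hB0

end PTSO

/-- **Oscillating tail prime sums.** If `∑_{p ≤ t} g(p) = θ t/log t + E_g(t)` with
`E_g(t) = o(t/log t)` and `∫_2^∞ |E_g(t)| t^{-2} dt < ∞`, then for `s` in any compact
subset of `ℝ \ {0}` (i.e. `δ ≤ |s| ≤ R`),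
`∑_{p > y} g(p) cos(s log p) p^{-(1 + 1/log y)} → 0` as `y → ∞`, uniformly on that set. -/
theorem prime_tail_sum_oscillating
    (θ : ℂ) (g : ℕ → ℂ)
    (hsmall : Tendsto (fun t : ℝ =>
        (primeSum g t - θ * (t / Real.log t)) / ((t / Real.log t : ℝ) : ℂ))
      atTop (nhds 0))
    (hint : IntegrableOn
      (fun t : ℝ => ‖primeSum g t - θ * (t / Real.log t)‖ / t ^ 2)
      (Set.Ioi 2) volume) :
    ∀ δ R : ℝ, 0 < δ →
      TendstoUniformlyOn
        (fun (y : ℝ) (s : ℝ) =>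
          ∑' p : {p : ℕ // p.Prime ∧ y < p},
            g p * ((Real.cos (s * Real.log p) *
              ((p : ℕ) : ℝ) ^ (-(1 + 1 / Real.log y)) : ℝ) : ℂ))
        (fun _ => 0) atTop {s : ℝ | δ ≤ |s| ∧ |s| ≤ R} := by
  intro δ R hδ
  have EEdef : ∀ t : ℝ, primeSum g t - θ * ((t:ℂ) / (Real.log t : ℂ)) = PTSO.EE θ g t := by
    intro t
    rw [PTSO.EE, PTSO.hh, Complex.ofReal_div]
  have hfun : (fun t : ℝ => ‖primeSum g t - θ * (t / Real.log t)‖ / t ^ 2)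
      = fun t : ℝ => ‖PTSO.EE θ g t‖ / t ^ 2 := by
    funext t
    rw [EEdef]
  rw [hfun] at hint
  -- `hsmall` in norm form
  have hsm : Tendsto (fun t : ℝ => ‖PTSO.EE θ g t‖ / (t / Real.log t)) atTop (nhds 0) := by
    have h1 := hsmall.norm
    rw [norm_zero] at h1
    refine Tendsto.congr' ?_ h1
    filter_upwards [eventually_ge_atTop (3:ℝ)] with t ht
    rw [EEdef, norm_div, Complex.norm_real, Real.norm_eq_abs,
      abs_of_pos (div_pos (PTSO.tpos ht) (PTSO.log_pos' ht))]
  -- eventual linear growth of `primeSum`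
  have hC : ∀ᶠ t : ℝ in atTop, ‖primeSum g t‖ ≤ (1 + ‖θ‖) * t := by
    filter_upwards [hsm.eventually (gt_mem_nhds one_pos), eventually_ge_atTop (3:ℝ)]
      with t h1 h3
    have h0 : 0 < t / Real.log t := div_pos (PTSO.tpos h3) (PTSO.log_pos' h3)
    have hEb : ‖PTSO.EE θ g t‖ ≤ t / Real.log t := le_of_lt ((div_lt_one h0).mp h1)
    have hht : t / Real.log t ≤ t := div_le_self (by linarith) (PTSO.one_le_log h3)
    have hsp : primeSum g t = PTSO.EE θ g t + θ * PTSO.hh t := by rw [PTSO.EE]; ring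
    calc ‖primeSum g t‖ ≤ ‖PTSO.EE θ g t‖ + ‖θ * PTSO.hh t‖ := by
          rw [hsp]; exact norm_add_le _ _
      _ ≤ t / Real.log t + ‖θ‖ * (t / Real.log t) := by
          rw [norm_mul, PTSO.norm_hh h3]
          exact add_le_add hEb le_rfl
      _ ≤ (1 + ‖θ‖) * t := by nlinarith [norm_nonneg θ]
  obtain ⟨T₀, hT₀⟩ := eventually_atTop.mp hC
  rw [Metric.tendstoUniformlyOn_iff]
  intro ε hε
  have hfl : Tendsto (fun y : ℝ => ((⌊y⌋₊ : ℕ) : ℝ)) atTop atTop :=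
    tendsto_natCast_atTop_atTop.comp tendsto_nat_floor_atTop
  set Bnd : ℝ → ℝ := fun y =>
      ‖PTSO.EE θ g ((⌊y⌋₊:ℕ):ℝ)‖ / (((⌊y⌋₊:ℕ):ℝ) / Real.log ((⌊y⌋₊:ℕ):ℝ))
      + (2 + R) * (∫ t in Set.Ioi ((⌊y⌋₊:ℕ):ℝ), ‖PTSO.EE θ g t‖ / t^2)
      + ‖θ‖ * ((3 + R) / δ * (Real.log ((⌊y⌋₊:ℕ):ℝ))⁻¹) with hBnd
  have hBndT : Tendsto Bnd atTop (nhds 0) := by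
    have t1 : Tendsto (fun y : ℝ =>
        ‖PTSO.EE θ g ((⌊y⌋₊:ℕ):ℝ)‖ / (((⌊y⌋₊:ℕ):ℝ) / Real.log ((⌊y⌋₊:ℕ):ℝ)))
        atTop (nhds 0) := hsm.comp hfl
    have t2 : Tendsto (fun y : ℝ =>
        (2 + R) * ∫ t in Set.Ioi ((⌊y⌋₊:ℕ):ℝ), ‖PTSO.EE θ g t‖ / t^2) atTop
        (nhds ((2 + R) * 0)) :=
      ((PTSO.tail_tendsto hint).comp hfl).const_mul (2 + R)
    have t3 : Tendsto (fun y : ℝ =>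
        ‖θ‖ * ((3 + R) / δ * (Real.log ((⌊y⌋₊:ℕ):ℝ))⁻¹)) atTop
        (nhds (‖θ‖ * ((3 + R) / δ * 0))) :=
      (((Real.tendsto_log_atTop.comp hfl).inv_tendsto_atTop).const_mul
        ((3 + R) / δ)).const_mul ‖θ‖
    rw [mul_zero] at t2
    rw [mul_zero, mul_zero] at t3
    have := (t1.add t2).add t3
    rw [add_zero, add_zero] at this
    exact this
  filter_upwards [hBndT.eventually (gt_mem_nhds hε), eventually_ge_atTop (3:ℝ),
    hfl.eventually (eventually_ge_atTop (max T₀ 3))] with y h1 h2 h3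
  intro s hs
  rw [dist_comm, dist_zero_right]
  have ha3 : (3:ℝ) ≤ ((⌊y⌋₊:ℕ):ℝ) := le_trans (le_max_right _ _) h3
  have hEint : IntegrableOn (fun t => ‖PTSO.EE θ g t‖ / t^2)
      (Set.Ioi ((⌊y⌋₊:ℕ):ℝ)) volume :=
    hint.mono_set (Set.Ioi_subset_Ioi (by linarith))
  have HC : ∀ t : ℝ, ((⌊y⌋₊ : ℕ) : ℝ) ≤ t → ‖primeSum g t‖ ≤ (1 + ‖θ‖) * t := by
    intro t ht
    exact hT₀ t (le_trans (le_trans (le_max_left _ _) h3) ht)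
  have hkey := PTSO.key (θ := θ) (g := g) hδ y s h2 hs.1 hs.2 HC hEint
  refine lt_of_le_of_lt (le_trans hkey ?_) h1
  rw [hBnd]
  have hlog1 : 1 ≤ Real.log ((⌊y⌋₊:ℕ):ℝ) := PTSO.one_le_log ha3
  have hterm1 : ‖PTSO.EE θ g ((⌊y⌋₊:ℕ):ℝ)‖ / ((⌊y⌋₊:ℕ):ℝ)
      ≤ ‖PTSO.EE θ g ((⌊y⌋₊:ℕ):ℝ)‖ / (((⌊y⌋₊:ℕ):ℝ) / Real.log ((⌊y⌋₊:ℕ):ℝ)) := by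
    have hpos : (0:ℝ) < ((⌊y⌋₊:ℕ):ℝ) / Real.log ((⌊y⌋₊:ℕ):ℝ) :=
      div_pos (PTSO.tpos ha3) (PTSO.log_pos' ha3)
    have hle : ((⌊y⌋₊:ℕ):ℝ) / Real.log ((⌊y⌋₊:ℕ):ℝ) ≤ ((⌊y⌋₊:ℕ):ℝ) :=
      div_le_self (by linarith) hlog1
    gcongr
  linarith
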